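/- Let H be a nonnegative self-adjoint operator, P(τ) orthogonal projections, and for t, τ > 0 define S(it, τ) = τ⁻¹(I − P(τ)e^{−itτH}P(τ)). Then S(it, τ) is a bounded operator satisfying Re⟨f, S(it,τ)f⟩ ≥ 0 for every f ∈ ℋ; consequently I + S(it,τ) is invertible with ‖(I + S(it,τ))⁻¹‖ ≤ 1. -/

import Mathlib

open scoped InnerProductSpace

private lemma my_inner_self_re {ℋ : Type*} [NormedAddCommGroup ℋ] [InnerProductSpace ℂ ℋ]
    (x : ℋ) : (⟪x, x⟫_ℂ).re = ‖x‖ ^ 2 := by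
  have := inner_self_eq_norm_sq (𝕜 := ℂ) x
  simpa [RCLike.re] using this

private lemma my_re_inner_le {ℋ : Type*} [NormedAddCommGroup ℋ] [InnerProductSpace ℂ ℋ]
    (x y : ℋ) : (⟪x, y⟫_ℂ).re ≤ ‖x‖ * ‖y‖ := by
  have h1 := RCLike.re_le_norm (K := ℂ) ⟪x, y⟫_ℂ
  have h2 := norm_inner_le_norm (𝕜 := ℂ) x y
  simp only [RCLike.re] at h1
  exact le_trans h1 h2

set_option maxHeartbeats 1000000 in
set_option synthInstance.maxHeartbeats 400000 in
/-- for the unitary group `U(s) = e^{−isH}` of a nonnegative self-adjoint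
operator, an orthogonal projection `P(τ)` and `t, τ > 0`, the bounded operator
`S(it,τ) = τ⁻¹(I − P(τ)e^{−itτH}P(τ))` is accretive (`Re⟨f, S f⟩ ≥ 0`), and `I + S(it,τ)`
is boundedly invertible with `‖(I + S(it,τ))⁻¹‖ ≤ 1`. -/
theorem S_accretive_and_resolvent_contraction
    {ℋ : Type*} [NormedAddCommGroup ℋ] [InnerProductSpace ℂ ℋ] [CompleteSpace ℋ]
    (U : ℝ → ℋ →L[ℂ] ℋ)
    (hU0 : U 0 = 1)
    (hUgroup : ∀ s s' : ℝ, U (s + s') = U s * U s')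
    (hUiso : ∀ (s : ℝ) (x : ℋ), ‖U s x‖ = ‖x‖)
    (hUcont : ∀ x : ℋ, Continuous fun s : ℝ => U s x)
    (Pτ : ℋ →L[ℂ] ℋ) (hPidem : IsIdempotentElem Pτ) (hPsa : IsSelfAdjoint Pτ)
    (t τ : ℝ) (ht : 0 < t) (hτ : 0 < τ)
    (S : ℋ →L[ℂ] ℋ) (hS : S = τ⁻¹ • ((1 : ℋ →L[ℂ] ℋ) - Pτ * U (t * τ) * Pτ)) :
    (∀ f : ℋ, 0 ≤ (⟪f, S f⟫_ℂ).re) ∧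
    ∃ T : ℋ →L[ℂ] ℋ, (1 + S) * T = 1 ∧ T * (1 + S) = 1 ∧ ‖T‖ ≤ 1 := by
  -- Pτ is a contraction
  have hPnorm : ∀ x : ℋ, ‖Pτ x‖ ≤ ‖x‖ := by
    intro x
    have h2 : (⟪Pτ x, Pτ x⟫_ℂ) = ⟪x, Pτ x⟫_ℂ := by
      have hadj := (ContinuousLinearMap.isSelfAdjoint_iff').mp hPsa
      calc (⟪Pτ x, Pτ x⟫_ℂ) = ⟪x, (ContinuousLinearMap.adjoint Pτ) (Pτ x)⟫_ℂ := by
            rw [ContinuousLinearMap.adjoint_inner_right]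
        _ = ⟪x, Pτ (Pτ x)⟫_ℂ := by rw [hadj]
        _ = ⟪x, (Pτ * Pτ) x⟫_ℂ := rfl
        _ = ⟪x, Pτ x⟫_ℂ := by rw [hPidem.eq]
    have h3 : ‖Pτ x‖ ^ 2 ≤ ‖x‖ * ‖Pτ x‖ := by
      rw [← my_inner_self_re (Pτ x), h2]
      exact my_re_inner_le _ _
    rcases eq_or_lt_of_le (norm_nonneg (Pτ x)) with h | h
    · rw [← h]; exact norm_nonneg x
    · nlinarith
  set A : ℋ →L[ℂ] ℋ := Pτ * U (t * τ) * Pτ with hA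
  have hAnorm : ∀ x : ℋ, ‖A x‖ ≤ ‖x‖ := by
    intro x
    calc ‖A x‖ = ‖Pτ (U (t * τ) (Pτ x))‖ := rfl
      _ ≤ ‖U (t * τ) (Pτ x)‖ := hPnorm _
      _ = ‖Pτ x‖ := hUiso _ _
      _ ≤ ‖x‖ := hPnorm x
  have hτinv : (0:ℝ) < τ⁻¹ := inv_pos.mpr hτ
  -- accretivity
  have hacc : ∀ f : ℋ, 0 ≤ (⟪f, S f⟫_ℂ).re := by
    intro f
    have hSf : S f = ((τ⁻¹ : ℝ) : ℂ) • (f - A f) := by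
      rw [hS]
      simp [ContinuousLinearMap.smul_apply, ContinuousLinearMap.sub_apply,
        RCLike.real_smul_eq_coe_smul (K := ℂ)]
    have h4 : (⟪f, f - A f⟫_ℂ).re = ‖f‖ ^ 2 - (⟪f, A f⟫_ℂ).re := by
      rw [inner_sub_right, Complex.sub_re, my_inner_self_re]
    have h5 : (⟪f, A f⟫_ℂ).re ≤ ‖f‖ ^ 2 := by
      calc (⟪f, A f⟫_ℂ).re ≤ ‖f‖ * ‖A f‖ := my_re_inner_le _ _
        _ ≤ ‖f‖ * ‖f‖ := by gcongr; exact hAnorm f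
        _ = ‖f‖ ^ 2 := (sq ‖f‖).symm
    have hnn : (0:ℝ) ≤ (⟪f, f - A f⟫_ℂ).re := by rw [h4]; linarith
    rw [hSf, inner_smul_right]
    simp only [Complex.mul_re, Complex.ofReal_re, Complex.ofReal_im, zero_mul, sub_zero]
    exact mul_nonneg hτinv.le hnn
  refine ⟨hacc, ?_⟩
  -- lower bound ‖f‖ ≤ ‖(1+S) f‖
  have hlb : ∀ f : ℋ, ‖f‖ ≤ ‖(1 + S) f‖ := by
    intro f
    have h1 : ‖f‖ ^ 2 ≤ (⟪f, (1 + S) f⟫_ℂ).re := by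
      have he : (1 + S) f = f + S f := rfl
      rw [he, inner_add_right, Complex.add_re, my_inner_self_re]
      linarith [hacc f]
    have h2 : (⟪f, (1 + S) f⟫_ℂ).re ≤ ‖f‖ * ‖(1 + S) f‖ := my_re_inner_le _ _
    rcases eq_or_lt_of_le (norm_nonneg f) with h | h
    · rw [← h]; exact norm_nonneg _
    · nlinarith
  -- construct the inverse via Neumann series
  set r : ℝ := 1 + τ⁻¹ with hr
  have hrpos : 0 < r := by positivity
  set B : ℋ →L[ℂ] ℋ := (r⁻¹ * τ⁻¹) • A with hB
  have hBnorm : ‖B‖ < 1 := by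
    have hAn : ‖A‖ ≤ 1 := ContinuousLinearMap.opNorm_le_bound _ zero_le_one
      (by intro x; simpa using hAnorm x)
    have hnB : ‖B‖ = |r⁻¹ * τ⁻¹| * ‖A‖ := by rw [hB, norm_smul, Real.norm_eq_abs]
    have habs : |r⁻¹ * τ⁻¹| = r⁻¹ * τ⁻¹ := abs_of_pos (by positivity)
    have hlt : r⁻¹ * τ⁻¹ < 1 := by
      rw [hr, show (1 + τ⁻¹)⁻¹ * τ⁻¹ = (τ * (1 + τ⁻¹))⁻¹ by rw [mul_inv]; ring]
      have he : τ * (1 + τ⁻¹) = τ + 1 := by field_simp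
      rw [he, inv_lt_one_iff₀]
      right; linarith
    calc ‖B‖ = r⁻¹ * τ⁻¹ * ‖A‖ := by rw [hnB, habs]
      _ ≤ r⁻¹ * τ⁻¹ * 1 := by gcongr
      _ < 1 := by rw [mul_one]; exact hlt
  have hfact : 1 + S = r • ((1 : ℋ →L[ℂ] ℋ) - B) := by
    rw [hS, hB, hr]
    have h6 : (1 + τ⁻¹) * ((1 + τ⁻¹)⁻¹ * τ⁻¹) = τ⁻¹ := by field_simp
    conv_rhs => rw [smul_sub, smul_smul, h6, add_smul, one_smul]
    rw [smul_sub]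
    abel
  set u := Units.oneSub B hBnorm with hu
  have hmul : (1 + S) * (r⁻¹ • (↑u⁻¹ : ℋ →L[ℂ] ℋ)) = 1 := by
    rw [hfact, smul_mul_smul_comm, mul_inv_cancel₀ hrpos.ne', one_smul]
    exact u.mul_inv
  refine ⟨r⁻¹ • (↑u⁻¹ : ℋ →L[ℂ] ℋ), hmul, ?_, ?_⟩
  · rw [hfact, smul_mul_smul_comm, inv_mul_cancel₀ hrpos.ne', one_smul]
    exact u.inv_mul
  · apply ContinuousLinearMap.opNorm_le_bound _ zero_le_one
    intro x
    have hle := hlb ((r⁻¹ • (↑u⁻¹ : ℋ →L[ℂ] ℋ)) x)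
    have heq : (1 + S) ((r⁻¹ • (↑u⁻¹ : ℋ →L[ℂ] ℋ)) x) = x := by
      rw [← ContinuousLinearMap.mul_apply, hmul, ContinuousLinearMap.one_apply]
    rw [heq] at hle
    linarith
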